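/- Let n be a natural number and y > z > 1 be real. Then n can be factored as n = m · n_1 ··· n_r where m is the z-rough part of n (the product of prime powers p^a || n with p > z), each n_i is z-smooth and satisfies n_i ≤ y, and r ≤ 1 + (log n)/(log(y/z)). Moreover m is a product of at most (log n)/(log z) primes (counted with multiplicity). -/

import Mathlib

open Finset

private lemma list_pow_le (z : ℝ) (hz : 0 ≤ z) :
    ∀ L : List ℕ, (∀ a ∈ L, z ≤ (a : ℝ)) → z ^ L.length ≤ (L.prod : ℝ) := by
  intro L
  induction L with
  | nil => simp
  | cons a L ih =>
    intro h
    have ha : z ≤ (a : ℝ) := h a List.mem_cons_self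
    have hL : z ^ L.length ≤ (L.prod : ℝ) := ih fun b hb => h b (List.mem_cons_of_mem _ hb)
    simp only [List.length_cons, List.prod_cons, pow_succ, Nat.cast_mul]
    rw [mul_comm ((a:ℝ)) _] at *
    calc z ^ L.length * z ≤ (L.prod : ℝ) * (a : ℝ) :=
          mul_le_mul hL ha hz (le_trans (pow_nonneg hz _) hL)
      _ = (L.prod : ℝ) * (a : ℝ) := rfl

private lemma exists_div (y z : ℝ) (hz : 1 < z) (hyz : z < y) :
    ∀ s : ℕ, 1 ≤ s → (∀ q ∈ s.primeFactors, (q : ℝ) ≤ z) → y < (s : ℝ) →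
      ∃ d : ℕ, d ∣ s ∧ y / z < (d : ℝ) ∧ (d : ℝ) ≤ y := by
  intro s
  induction s using Nat.strong_induction_on with
  | _ s ih =>
    intro hs hsm hys
    have hs2 : 2 ≤ s := by
      by_contra h
      interval_cases s <;> simp_all <;> linarith
    have hp : s.minFac.Prime := Nat.minFac_prime (by omega)
    have hpd : s.minFac ∣ s := Nat.minFac_dvd s
    have hpz : (s.minFac : ℝ) ≤ z := hsm _ (Nat.mem_primeFactors.mpr ⟨hp, hpd, by omega⟩)
    set t := s / s.minFac with ht
    have hst : s = s.minFac * t := (Nat.mul_div_cancel' hpd).symm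
    have ht1 : 1 ≤ t := Nat.one_le_iff_ne_zero.mpr (by rintro h; rw [h, mul_zero] at hst; omega)
    have htlt : t < s := by
      have := hp.two_le
      calc t = s / s.minFac := rfl
        _ < s := Nat.div_lt_self (by omega) (by omega)
    have hts : (t : ℝ) * (s.minFac : ℝ) = (s : ℝ) := by
      rw [mul_comm]; exact_mod_cast hst.symm
    have hpos : (0:ℝ) < s.minFac := by exact_mod_cast hp.pos
    have htlb : y / z < (t : ℝ) := by
      rw [div_lt_iff₀ (by linarith)]
      calc y < (s : ℝ) := hys
        _ = (t : ℝ) * (s.minFac : ℝ) := hts.symm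
        _ ≤ (t : ℝ) * z := by
            apply mul_le_mul_of_nonneg_left hpz (by positivity)
    by_cases hty : (t : ℝ) ≤ y
    · exact ⟨t, Dvd.intro_left _ hst.symm, htlb, hty⟩
    · have htm : ∀ q ∈ t.primeFactors, (q : ℝ) ≤ z := by
        intro q hq
        exact hsm q (Nat.primeFactors_mono (Dvd.intro_left _ hst.symm) (by omega) hq)
      obtain ⟨d, hd, h1, h2⟩ := ih t htlt ht1 htm (lt_of_not_ge hty)
      exact ⟨d, hd.trans (Dvd.intro_left _ hst.symm), h1, h2⟩

private lemma smooth_factor (y z : ℝ) (hz : 1 < z) (hyz : z < y) :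
    ∀ s : ℕ, 1 ≤ s → (∀ q ∈ s.primeFactors, (q : ℝ) ≤ z) →
      ∃ (r : ℕ) (ns : Fin r → ℕ), s = ∏ i : Fin r, ns i ∧
        (∀ i : Fin r, (ns i : ℝ) ≤ y ∧ ∀ q ∈ (ns i).primeFactors, (q : ℝ) ≤ z) ∧
        1 ≤ r ∧ (y / z) ^ (r - 1) ≤ (s : ℝ) := by
  intro s
  induction s using Nat.strong_induction_on with
  | _ s ih =>
    intro hs hsm
    by_cases hsy : (s : ℝ) ≤ y
    · refine ⟨1, fun _ => s, by simp, fun i => ⟨hsy, hsm⟩, le_refl 1, ?_⟩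
      simp; exact_mod_cast hs
    · obtain ⟨d, hd, hdl, hdu⟩ := exists_div y z hz hyz s hs hsm (lt_of_not_ge hsy)
      have hd1 : 1 ≤ d := by
        by_contra h
        have : d = 0 := by omega
        rw [this] at hdl; simp at hdl
        have : (0:ℝ) < y / z := div_pos (by linarith) (by linarith)
        linarith
      set t := s / d with htdef
      have hst : s = d * t := (Nat.mul_div_cancel' hd).symm
      have ht1 : 1 ≤ t := Nat.one_le_iff_ne_zero.mpr (by rintro h; rw [h, mul_zero] at hst; omega)
      have hd2 : 2 ≤ d := by
        by_contra h
        have : d = 1 := by omega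
        rw [this] at hdl
        have h1 : y / z > 1 := (one_lt_div (by linarith)).mpr hyz
        simp at hdl; linarith
      have htlt : t < s := by
        rw [hst]; nlinarith
      have htm : ∀ q ∈ t.primeFactors, (q : ℝ) ≤ z := fun q hq =>
        hsm q (Nat.primeFactors_mono (Dvd.intro_left _ hst.symm) (by omega) hq)
      obtain ⟨r, ns, hprod, hbound, hr1, hlow⟩ := ih t htlt ht1 htm
      have hdm : ∀ q ∈ d.primeFactors, (q : ℝ) ≤ z := fun q hq =>
        hsm q (Nat.primeFactors_mono hd (by omega) hq)
      refine ⟨r + 1, Fin.cons d ns, ?_, ?_, by omega, ?_⟩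
      · rw [Fin.prod_cons, ← hprod, hst]
      · intro i
        refine Fin.cases ?_ ?_ i
        · exact ⟨hdu, hdm⟩
        · intro j; simpa using hbound j
      · have : r + 1 - 1 = (r - 1) + 1 := by omega
        rw [this, pow_succ]
        have hyz1 : (0:ℝ) < y / z := div_pos (by linarith) (by linarith)
        calc (y/z)^(r-1) * (y/z) ≤ (t : ℝ) * (d : ℝ) := by
              exact mul_le_mul hlow (le_of_lt hdl) (le_of_lt hyz1)
                (le_trans (pow_nonneg (le_of_lt hyz1) _) hlow)
          _ = (s : ℝ) := by rw [mul_comm]; exact_mod_cast hst.symm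

/-- Landreau-type factorization: `n = n_{(>z)} · n_1 ⋯ n_r` with each `n_i` a `z`-smooth
number at most `y`, `r ≤ 1 + log_{y/z} n`, and the `z`-rough part `n_{(>z)}` a product of
at most `log_z n` primes (with multiplicity). -/
theorem stmt2 (n : ℕ) (hn : 1 ≤ n) (y z : ℝ) (hz : 1 < z) (hy : z < y) :
    ∃ (r : ℕ) (ns : Fin r → ℕ),
      n = (∏ p ∈ n.primeFactors.filter (fun p : ℕ => z < (p : ℝ)), p ^ n.factorization p)
            * ∏ i : Fin r, ns i ∧
      (∀ i : Fin r, (ns i : ℝ) ≤ y ∧ ∀ q ∈ (ns i).primeFactors, (q : ℝ) ≤ z) ∧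
      (r : ℝ) ≤ 1 + Real.log n / Real.log (y / z) ∧
      (((∏ p ∈ n.primeFactors.filter (fun p : ℕ => z < (p : ℝ)),
          p ^ n.factorization p).primeFactorsList.length : ℝ))
        ≤ Real.log n / Real.log z := by
  set m := ∏ p ∈ n.primeFactors.filter (fun p : ℕ => z < (p : ℝ)), p ^ n.factorization p with hm
  set s := ∏ p ∈ n.primeFactors.filter (fun p : ℕ => ¬ z < (p : ℝ)), p ^ n.factorization p
    with hsdef
  have hms : m * s = n := by
    rw [hm, hsdef, Finset.prod_filter_mul_prod_filter_not]
    conv_rhs => rw [← Nat.factorization_prod_pow_eq_self (show n ≠ 0 by omega)]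
    rw [Finsupp.prod, Nat.support_factorization]
  have hn0 : n ≠ 0 := by omega
  have hm1 : 1 ≤ m := by
    apply Finset.one_le_prod'
    intro p hp
    have : p.Prime := Nat.prime_of_mem_primeFactors (Finset.mem_filter.mp hp).1
    exact Nat.one_le_pow _ _ this.pos
  have hs1 : 1 ≤ s := by
    apply Finset.one_le_prod'
    intro p hp
    have : p.Prime := Nat.prime_of_mem_primeFactors (Finset.mem_filter.mp hp).1
    exact Nat.one_le_pow _ _ this.pos
  have hmn : m ≤ n := by nlinarith
  have hsn : s ≤ n := by nlinarith
  have hssm : ∀ q ∈ s.primeFactors, (q : ℝ) ≤ z := by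
    intro q hq
    obtain ⟨hqp, hqd, -⟩ := Nat.mem_primeFactors.mp hq
    obtain ⟨p, hp, hqpd⟩ := hqp.prime.exists_mem_finset_dvd hqd
    obtain ⟨hpmem, hpz⟩ := Finset.mem_filter.mp hp
    have hpp : p.Prime := Nat.prime_of_mem_primeFactors hpmem
    have : q = p := (Nat.prime_dvd_prime_iff_eq hqp hpp).mp (hqp.dvd_of_dvd_pow hqpd)
    rw [this]; exact le_of_not_gt hpz
  have hmrough : ∀ q ∈ m.primeFactors, z < (q : ℝ) := by
    intro q hq
    obtain ⟨hqp, hqd, -⟩ := Nat.mem_primeFactors.mp hq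
    obtain ⟨p, hp, hqpd⟩ := hqp.prime.exists_mem_finset_dvd hqd
    obtain ⟨hpmem, hpz⟩ := Finset.mem_filter.mp hp
    have hpp : p.Prime := Nat.prime_of_mem_primeFactors hpmem
    have : q = p := (Nat.prime_dvd_prime_iff_eq hqp hpp).mp (hqp.dvd_of_dvd_pow hqpd)
    rw [this]; exact hpz
  obtain ⟨r, ns, hprod, hbound, hr1, hlow⟩ := smooth_factor y z hz hy s hs1 hssm
  refine ⟨r, ns, by rw [← hprod, hms], hbound, ?_, ?_⟩
  · have hyz1 : (1:ℝ) < y / z := (one_lt_div (by linarith)).mpr hy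
    have hlog : 0 < Real.log (y / z) := Real.log_pos hyz1
    have h1 : ((r - 1 : ℕ) : ℝ) * Real.log (y / z) ≤ Real.log n := by
      rw [← Real.log_pow]
      apply Real.log_le_log (by positivity)
      calc ((y/z) ^ (r-1) : ℝ) ≤ (s : ℝ) := hlow
        _ ≤ (n : ℝ) := by exact_mod_cast hsn
    have hcast : ((r - 1 : ℕ) : ℝ) = (r : ℝ) - 1 := by
      rw [Nat.cast_sub hr1]; simp
    rw [hcast] at h1
    rw [← sub_le_iff_le_add']
    exact (le_div_iff₀ hlog).mpr h1
  · have hz0 : (0:ℝ) ≤ z := by linarith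
    have hlen : (z : ℝ) ^ m.primeFactorsList.length ≤ (m : ℝ) := by
      have := list_pow_le z hz0 m.primeFactorsList ?_
      · calc (z:ℝ) ^ m.primeFactorsList.length ≤ (m.primeFactorsList.prod : ℝ) := this
          _ = (m : ℝ) := by rw [Nat.prod_primeFactorsList (by omega)]
      · intro a ha
        have hap : a.Prime := Nat.prime_of_mem_primeFactorsList ha
        have : a ∈ m.primeFactors := Nat.mem_primeFactors.mpr
          ⟨hap, Nat.dvd_of_mem_primeFactorsList ha, by omega⟩
        exact le_of_lt (hmrough a this)
    have hlogz : 0 < Real.log z := Real.log_pos hz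
    have h1 : (m.primeFactorsList.length : ℝ) * Real.log z ≤ Real.log n := by
      rw [← Real.log_pow]
      apply Real.log_le_log (by positivity)
      calc (z:ℝ) ^ m.primeFactorsList.length ≤ (m : ℝ) := hlen
        _ ≤ (n : ℝ) := by exact_mod_cast hmn
    exact (le_div_iff₀ hlogz).mpr h1
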